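/- Let n ≥ 1, 1 ≤ s ≤ n, R > 0, L > μ > 0, κ = μ/L, and α_s = min{1, s/√n}. Suppose x, σ ∈ ℝⁿ satisfy ‖x‖₂ ≤ R, ‖σ‖₂ ≤ L, ⟨σ, x⟩ ≥ μR, and σ₁ ≥ ... ≥ σₙ ≥ 0. Then ∑_{i=1}^s xᵢ ≥ (κ·α_s - √(s - α_s²)·√(1 - κ²))·R. -/

import Mathlib

open Finset
open scoped Classical

noncomputable def tsdW (k : ℕ) : ℝ := Real.sqrt (k + 1) - Real.sqrt k

lemma tsd_w_nonneg (k : ℕ) : 0 ≤ tsdW k := by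
  unfold tsdW
  have h : Real.sqrt k ≤ Real.sqrt (k + 1) :=
    Real.sqrt_le_sqrt (by linarith [Nat.cast_nonneg (α := ℝ) k] : (k : ℝ) ≤ (k : ℝ) + 1)
  linarith

lemma tsd_w_sum (m : ℕ) : ∑ k ∈ Finset.range m, tsdW k = Real.sqrt m := by
  unfold tsdW
  have h := Finset.sum_range_sub (fun k : ℕ => Real.sqrt k) m
  push_cast at h
  simpa using h

lemma tsd_filter (m s : ℕ) :
    (Finset.range m).filter (fun k => k < s) = Finset.range (min m s) := by
  rw [Finset.range_eq_Ico, Finset.Ico_filter_lt, ← Finset.range_eq_Ico]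

lemma tsd_max_sum (f : ℕ → ℝ) (m : ℕ) :
    ∑ t ∈ Finset.range m, ∑ u ∈ Finset.range m, f (max t u) * (tsdW t * tsdW u)
      = ∑ t ∈ Finset.range m, f t := by
  induction m with
  | zero => simp
  | succ m ih =>
    rw [Finset.sum_range_succ]
    simp only [Finset.sum_range_succ]
    rw [Finset.sum_add_distrib]
    have h1 : ∀ t ∈ Finset.range m,
        f (max t m) * (tsdW t * tsdW m) = (f m * tsdW m) * tsdW t := by
      intro t ht
      rw [max_eq_right (Nat.le_of_lt (Finset.mem_range.mp ht))]
      ring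
    have h2 : ∀ u ∈ Finset.range m,
        f (max m u) * (tsdW m * tsdW u) = (f m * tsdW m) * tsdW u := by
      intro u hu
      rw [max_eq_left (Nat.le_of_lt (Finset.mem_range.mp hu))]
      ring
    rw [Finset.sum_congr rfl h1, Finset.sum_congr rfl h2, ← Finset.mul_sum,
      tsd_w_sum, ih, max_self]
    have ha : Real.sqrt m ^ 2 = (m : ℝ) := Real.sq_sqrt (Nat.cast_nonneg m)
    have hb : Real.sqrt ((m : ℝ) + 1) ^ 2 = (m : ℝ) + 1 := Real.sq_sqrt (by positivity)
    unfold tsdW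
    linear_combination f m * hb - f m * ha

lemma tsd_sq_bound (m : ℕ) (σ : ℕ → ℝ) (h0 : ∀ k, 0 ≤ σ k)
    (hm : ∀ j k : ℕ, j ≤ k → σ k ≤ σ j) :
    ∑ k ∈ Finset.range m, σ k ^ 2 ≤ (∑ k ∈ Finset.range m, σ k * tsdW k) ^ 2 := by
  have key : ∑ t ∈ Finset.range m, ∑ u ∈ Finset.range m, (σ (max t u)) ^ 2 * (tsdW t * tsdW u)
      ≤ ∑ t ∈ Finset.range m, ∑ u ∈ Finset.range m, (σ t * tsdW t) * (σ u * tsdW u) := by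
    apply Finset.sum_le_sum
    intro t _
    apply Finset.sum_le_sum
    intro u _
    have hw := mul_nonneg (tsd_w_nonneg t) (tsd_w_nonneg u)
    have hσσ : σ (max t u) ^ 2 ≤ σ t * σ u := by
      rcases le_total t u with h | h
      · rw [max_eq_right h]
        have h1 := hm t u h
        nlinarith [h0 u]
      · rw [max_eq_left h]
        have h1 := hm u t h
        nlinarith [h0 t]
    calc (σ (max t u)) ^ 2 * (tsdW t * tsdW u)
        ≤ (σ t * σ u) * (tsdW t * tsdW u) := mul_le_mul_of_nonneg_right hσσ hw
      _ = (σ t * tsdW t) * (σ u * tsdW u) := by ring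
  calc ∑ k ∈ Finset.range m, σ k ^ 2
      = ∑ t ∈ Finset.range m, ∑ u ∈ Finset.range m, (σ (max t u)) ^ 2 * (tsdW t * tsdW u) :=
        (tsd_max_sum (fun t => σ t ^ 2) m).symm
    _ ≤ ∑ t ∈ Finset.range m, ∑ u ∈ Finset.range m, (σ t * tsdW t) * (σ u * tsdW u) := key
    _ = (∑ k ∈ Finset.range m, σ k * tsdW k) ^ 2 := by rw [sq, Finset.sum_mul_sum]

lemma tsd_abel (σ g : ℕ → ℝ) (h0 : ∀ k, 0 ≤ σ k)
    (hm : ∀ j k : ℕ, j ≤ k → σ k ≤ σ j) (n : ℕ)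
    (hG : ∀ m, m ≤ n → 0 ≤ ∑ k ∈ Finset.range m, g k) :
    0 ≤ ∑ k ∈ Finset.range n, σ k * g k := by
  have main : ∀ m, m ≤ n →
      σ m * (∑ k ∈ Finset.range m, g k) ≤ ∑ k ∈ Finset.range m, σ k * g k := by
    intro m
    induction m with
    | zero => intro _; simp
    | succ m ih =>
      intro hmn
      have h1 := ih (Nat.le_of_succ_le hmn)
      have hGm := hG (m + 1) hmn
      rw [Finset.sum_range_succ] at hGm
      have h2 : σ (m + 1) * ((∑ k ∈ Finset.range m, g k) + g m)
          ≤ σ m * ((∑ k ∈ Finset.range m, g k) + g m) :=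
        mul_le_mul_of_nonneg_right (hm m (m + 1) (Nat.le_succ m)) hGm
      rw [Finset.sum_range_succ, Finset.sum_range_succ]
      nlinarith [h1, h2]
  have h3 := main n le_rfl
  have h4 : 0 ≤ σ n * ∑ k ∈ Finset.range n, g k := mul_nonneg (h0 n) (hG n le_rfl)
  linarith

lemma tsd_stepA (n s : ℕ) (hs : 1 ≤ s) (hsn : s ≤ n) (αs : ℝ)
    (hαs : αs = min 1 ((s : ℝ) / Real.sqrt n))
    (σ : ℕ → ℝ) (h0 : ∀ k, 0 ≤ σ k) (hm : ∀ j k : ℕ, j ≤ k → σ k ≤ σ j) :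
    αs * Real.sqrt (∑ k ∈ Finset.range n, σ k ^ 2) ≤ ∑ k ∈ Finset.range s, σ k := by
  have hn : 1 ≤ n := hs.trans hsn
  have hn0 : (0 : ℝ) < n := by exact_mod_cast hn
  have hsqn : 0 < Real.sqrt n := Real.sqrt_pos.mpr hn0
  have hα0 : 0 ≤ αs := by
    rw [hαs]; exact le_min zero_le_one (by positivity)
  have hα1 : αs ≤ 1 := hαs ▸ min_le_left _ _
  have hα2 : αs ≤ (s : ℝ) / Real.sqrt n := hαs ▸ min_le_right _ _
  have hkey : ∀ m : ℕ, m ≤ n → αs * Real.sqrt m ≤ ((min m s : ℕ) : ℝ) := by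
    intro m hmn
    have hm0 : (0 : ℝ) ≤ m := Nat.cast_nonneg m
    have h1 : αs * Real.sqrt m ≤ Real.sqrt m := by
      nlinarith [Real.sqrt_nonneg (m : ℝ)]
    have hsm : Real.sqrt m ≤ (m : ℝ) := by
      rcases Nat.eq_zero_or_pos m with h | h
      · simp [h]
      · have h1m : (1 : ℝ) ≤ m := by exact_mod_cast h
        calc Real.sqrt m ≤ Real.sqrt ((m : ℝ) ^ 2) := Real.sqrt_le_sqrt (by nlinarith)
          _ = m := Real.sqrt_sq hm0
    have h2 : αs * Real.sqrt m ≤ (s : ℝ) := by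
      have hmsn : Real.sqrt m ≤ Real.sqrt n :=
        Real.sqrt_le_sqrt (by exact_mod_cast hmn)
      have h3 : αs * Real.sqrt m ≤ ((s : ℝ) / Real.sqrt n) * Real.sqrt n :=
        mul_le_mul hα2 hmsn (Real.sqrt_nonneg _) (by positivity)
      rwa [div_mul_cancel₀ _ (ne_of_gt hsqn)] at h3
    rw [Nat.cast_min]
    exact le_min (h1.trans hsm) h2
  have hA0 : 0 ≤ ∑ k ∈ Finset.range n, σ k * tsdW k :=
    Finset.sum_nonneg fun k _ => mul_nonneg (h0 k) (tsd_w_nonneg k)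
  have hQA : Real.sqrt (∑ k ∈ Finset.range n, σ k ^ 2) ≤ ∑ k ∈ Finset.range n, σ k * tsdW k := by
    have h := Real.sqrt_le_sqrt (tsd_sq_bound n σ h0 hm)
    rwa [Real.sqrt_sq hA0] at h
  have hG : ∀ m, m ≤ n →
      0 ≤ ∑ k ∈ Finset.range m, ((if k < s then (1 : ℝ) else 0) - αs * tsdW k) := by
    intro m hmn
    rw [Finset.sum_sub_distrib, ← Finset.mul_sum, tsd_w_sum]
    have hcard : ∑ k ∈ Finset.range m, (if k < s then (1 : ℝ) else 0) = ((min m s : ℕ) : ℝ) := by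
      rw [← Finset.sum_filter, tsd_filter]
      simp
    rw [hcard]
    linarith [hkey m hmn]
  have habel : 0 ≤ ∑ k ∈ Finset.range n, σ k * ((if k < s then (1 : ℝ) else 0) - αs * tsdW k) :=
    tsd_abel σ (fun k => (if k < s then (1 : ℝ) else 0) - αs * tsdW k) h0 hm n hG
  have hsplit : ∑ k ∈ Finset.range n, σ k * ((if k < s then (1 : ℝ) else 0) - αs * tsdW k)
      = (∑ k ∈ Finset.range s, σ k) - αs * ∑ k ∈ Finset.range n, σ k * tsdW k := by
    have e : ∀ k, σ k * ((if k < s then (1 : ℝ) else 0) - αs * tsdW k)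
        = (if k < s then σ k else 0) - αs * (σ k * tsdW k) := by
      intro k
      by_cases h : k < s
      · simp only [if_pos h]; ring
      · simp only [if_neg h]; ring
    simp only [e]
    rw [Finset.sum_sub_distrib, ← Finset.mul_sum]
    congr 1
    rw [← Finset.sum_filter, tsd_filter, min_eq_right hsn]
  rw [hsplit] at habel
  have hfin : αs * Real.sqrt (∑ k ∈ Finset.range n, σ k ^ 2)
      ≤ αs * ∑ k ∈ Finset.range n, σ k * tsdW k :=
    mul_le_mul_of_nonneg_left hQA hα0
  linarith

set_option maxHeartbeats 2000000 in
theorem truncated_spectral_descent_descent_term_lower_bound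
    (n s : ℕ) (hn : 1 ≤ n) (hs : 1 ≤ s) (hsn : s ≤ n)
    (R L μ : ℝ) (hR : 0 < R) (hμ : 0 < μ) (hμL : μ < L)
    (κ αs : ℝ) (hκ : κ = μ / L) (hαs : αs = min 1 ((s : ℝ) / Real.sqrt n))
    (x σ : Fin n → ℝ)
    (hx : Real.sqrt (∑ i, x i ^ 2) ≤ R)
    (hσ : Real.sqrt (∑ i, σ i ^ 2) ≤ L)
    (hdot : μ * R ≤ ∑ i, σ i * x i)
    (hmono : ∀ i j : Fin n, i ≤ j → σ j ≤ σ i)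
    (hnonneg : ∀ i, 0 ≤ σ i) :
    (κ * αs - Real.sqrt ((s : ℝ) - αs ^ 2) * Real.sqrt (1 - κ ^ 2)) * R ≤
      ∑ i ∈ Finset.univ.filter (fun i : Fin n => (i : ℕ) < s), x i := by
  classical
  have hL : 0 < L := hμ.trans hμL
  set Q := ∑ i, σ i ^ 2 with hQdef
  set P := ∑ i, σ i * x i with hPdef
  set X := ∑ i ∈ Finset.univ.filter (fun i : Fin n => (i : ℕ) < s), x i with hXdef
  set C := ∑ i ∈ Finset.univ.filter (fun i : Fin n => (i : ℕ) < s), σ i with hCdef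
  have hα0 : 0 ≤ αs := by
    rw [hαs]; exact le_min zero_le_one (by positivity)
  have hκ0 : 0 ≤ κ := by rw [hκ]; positivity
  -- basic sums
  have hsx0 : 0 ≤ ∑ i, x i ^ 2 := Finset.sum_nonneg fun i _ => sq_nonneg _
  have hQ0 : 0 ≤ Q := Finset.sum_nonneg fun i _ => sq_nonneg _
  have hsx : ∑ i, x i ^ 2 ≤ R ^ 2 := by
    nlinarith only [Real.sq_sqrt hsx0, Real.sqrt_nonneg (∑ i, x i ^ 2), hx, hR.le]
  have hQL : Q ≤ L ^ 2 := by
    nlinarith only [Real.sq_sqrt hQ0, Real.sqrt_nonneg Q, hσ, hL.le]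
  have hP1 : P ≤ Real.sqrt Q * R := by
    have h := Real.sum_mul_le_sqrt_mul_sqrt Finset.univ σ x
    have h2 : Real.sqrt Q * Real.sqrt (∑ i, x i ^ 2) ≤ Real.sqrt Q * R :=
      mul_le_mul_of_nonneg_left hx (Real.sqrt_nonneg Q)
    exact le_trans h h2
  have hμQ : μ ≤ Real.sqrt Q := by
    nlinarith only [hP1, hdot, hR]
  have hsqQpos : 0 < Real.sqrt Q := lt_of_lt_of_le hμ hμQ
  have hQpos : 0 < Q := Real.sqrt_pos.mp hsqQpos
  have hQne : Q ≠ 0 := ne_of_gt hQpos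
  have hQsq : Real.sqrt Q ^ 2 = Q := Real.sq_sqrt hQ0
  have hsqQL : Real.sqrt Q ≤ L := by
    nlinarith only [hQL, hQsq, hsqQpos, hL.le]
  -- indicator function
  set c : Fin n → ℝ := fun i => if (i : ℕ) < s then 1 else 0 with hcdef
  have hceq : ∀ f : Fin n → ℝ,
      ∑ i, c i * f i = ∑ i ∈ Finset.univ.filter (fun i : Fin n => (i : ℕ) < s), f i := by
    intro f
    rw [Finset.sum_filter]
    apply Finset.sum_congr rfl
    intro i _
    by_cases h : (i : ℕ) < s <;> simp [hcdef, h]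
  have hXc : ∑ i, c i * x i = X := hceq x
  have hCc : ∑ i, c i * σ i = C := hceq σ
  have hc2 : ∑ i, c i ^ 2 = (s : ℝ) := by
    have e : ∀ i : Fin n, c i ^ 2 = (fun k : ℕ => if k < s then (1 : ℝ) else 0) (i : ℕ) := by
      intro i
      by_cases h : (i : ℕ) < s <;> simp [hcdef, h]
    rw [Finset.sum_congr rfl fun i _ => e i,
      Fin.sum_univ_eq_sum_range (fun k : ℕ => if k < s then (1 : ℝ) else 0) n,
      ← Finset.sum_filter, tsd_filter, min_eq_right hsn]
    simp
  -- step A : αs * sqrt Q ≤ C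
  set σ' : ℕ → ℝ := fun k => if h : k < n then σ ⟨k, h⟩ else 0 with hσ'def
  have hσ'0 : ∀ k, 0 ≤ σ' k := by
    intro k
    by_cases h : k < n <;> simp [hσ'def, h, hnonneg]
  have hσ'm : ∀ j k : ℕ, j ≤ k → σ' k ≤ σ' j := by
    intro j k hjk
    by_cases hk : k < n
    · have hj : j < n := lt_of_le_of_lt hjk hk
      simp only [hσ'def, dif_pos hk, dif_pos hj]
      exact hmono ⟨j, hj⟩ ⟨k, hk⟩ hjk
    · have h1 := hσ'0 j
      simp only [hσ'def, dif_neg hk]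
      simpa [hσ'def] using h1
  have hcoe : ∀ i : Fin n, σ' (i : ℕ) = σ i := by
    intro i
    simp [hσ'def, i.isLt]
  have hQ' : ∑ k ∈ Finset.range n, σ' k ^ 2 = Q := by
    rw [← Fin.sum_univ_eq_sum_range (fun k => σ' k ^ 2) n]
    exact Finset.sum_congr rfl fun i _ => by rw [hcoe]
  have hC' : ∑ k ∈ Finset.range s, σ' k = C := by
    have h1 : ∑ k ∈ Finset.range s, σ' k
        = ∑ k ∈ Finset.range n, (if k < s then σ' k else 0) := by
      rw [← Finset.sum_filter, tsd_filter, min_eq_right hsn]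
    rw [h1, ← Fin.sum_univ_eq_sum_range (fun k => if k < s then σ' k else 0) n, ← hCc]
    apply Finset.sum_congr rfl
    intro i _
    by_cases h : (i : ℕ) < s <;> simp [hcdef, h, hcoe i]
  have hstepA : αs * Real.sqrt Q ≤ C := by
    have h := tsd_stepA n s hs hsn αs hαs σ' hσ'0 hσ'm
    rwa [hQ', hC'] at h
  -- Cauchy-Schwarz in the plane
  set a : Fin n → ℝ := fun i => c i - (C / Q) * σ i with hadef
  set b : Fin n → ℝ := fun i => x i - (P / Q) * σ i with hbdef
  have hab : ∑ i, a i * b i = X - C * P / Q := by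
    have e : ∀ i : Fin n, a i * b i
        = c i * x i - (P / Q) * (c i * σ i) - (C / Q) * (σ i * x i)
          + ((C / Q) * (P / Q)) * σ i ^ 2 := by
      intro i
      simp only [hadef, hbdef]
      ring
    rw [Finset.sum_congr rfl fun i _ => e i, Finset.sum_add_distrib, Finset.sum_sub_distrib,
      Finset.sum_sub_distrib, ← Finset.mul_sum, ← Finset.mul_sum, ← Finset.mul_sum,
      hXc, hCc, ← hPdef, ← hQdef]
    field_simp
    ring
  have ha2 : ∑ i, a i ^ 2 = (s : ℝ) - C ^ 2 / Q := by
    have e : ∀ i : Fin n, a i ^ 2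
        = c i ^ 2 - (2 * (C / Q)) * (c i * σ i) + ((C / Q) ^ 2) * σ i ^ 2 := by
      intro i
      simp only [hadef]
      ring
    rw [Finset.sum_congr rfl fun i _ => e i, Finset.sum_add_distrib, Finset.sum_sub_distrib,
      ← Finset.mul_sum, ← Finset.mul_sum, hc2, hCc, ← hQdef]
    field_simp
    ring
  have hb2 : ∑ i, b i ^ 2 = (∑ i, x i ^ 2) - P ^ 2 / Q := by
    have e : ∀ i : Fin n, b i ^ 2
        = x i ^ 2 - (2 * (P / Q)) * (σ i * x i) + ((P / Q) ^ 2) * σ i ^ 2 := by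
      intro i
      simp only [hbdef]
      ring
    rw [Finset.sum_congr rfl fun i _ => e i, Finset.sum_add_distrib, Finset.sum_sub_distrib,
      ← Finset.mul_sum, ← Finset.mul_sum, ← hPdef, ← hQdef]
    field_simp
    ring
  have hb2le : ∑ i, b i ^ 2 ≤ R ^ 2 - P ^ 2 / Q := by
    rw [hb2]; linarith only [hsx]
  have hcs : ∑ i, (-(a i)) * b i
      ≤ Real.sqrt (∑ i, (-(a i)) ^ 2) * Real.sqrt (∑ i, b i ^ 2) :=
    Real.sum_mul_le_sqrt_mul_sqrt Finset.univ (fun i => -(a i)) b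
  have hneg1 : ∑ i, (-(a i)) * b i = -(X - C * P / Q) := by
    rw [← hab]
    simp [neg_mul]
  have hneg2 : ∑ i, (-(a i)) ^ 2 = (s : ℝ) - C ^ 2 / Q := by
    rw [← ha2]
    simp [neg_sq]
  rw [hneg1, hneg2] at hcs
  have hsa0 : 0 ≤ Real.sqrt ((s : ℝ) - C ^ 2 / Q) := Real.sqrt_nonneg _
  have hcs2 : -(X - C * P / Q)
      ≤ Real.sqrt ((s : ℝ) - C ^ 2 / Q) * Real.sqrt (R ^ 2 - P ^ 2 / Q) := by
    have h2 : Real.sqrt (∑ i, b i ^ 2) ≤ Real.sqrt (R ^ 2 - P ^ 2 / Q) :=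
      Real.sqrt_le_sqrt hb2le
    have h3 := mul_le_mul_of_nonneg_left h2 hsa0
    linarith only [hcs, h3]
  -- introduce beta and t
  set β := C / Real.sqrt Q with hβdef
  set t := P / (R * Real.sqrt Q) with htdef
  clear_value σ' a b c X C P Q β t
  have hQss : Real.sqrt Q * Real.sqrt Q = Q := Real.mul_self_sqrt hQ0
  have hRne : R ≠ 0 := ne_of_gt hR
  have hsqQne : Real.sqrt Q ≠ 0 := ne_of_gt hsqQpos
  have hCPQ : C * P / Q = R * (β * t) := by
    have h : R * (C / Real.sqrt Q * (P / (R * Real.sqrt Q)))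
        = C * P / (Real.sqrt Q * Real.sqrt Q) := by
      field_simp
    rw [hβdef, htdef, h, hQss]
  have hsC : (s : ℝ) - C ^ 2 / Q = (s : ℝ) - β ^ 2 := by
    rw [hβdef, div_pow, hQsq]
  have hRP : R ^ 2 - P ^ 2 / Q = R ^ 2 * (1 - t ^ 2) := by
    rw [htdef, div_pow, mul_pow, hQsq]
    field_simp
  have hsqrtRP : Real.sqrt (R ^ 2 - P ^ 2 / Q) = R * Real.sqrt (1 - t ^ 2) := by
    rw [hRP, Real.sqrt_mul (sq_nonneg R), Real.sqrt_sq hR.le]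
  rw [hsC, hsqrtRP, hCPQ] at hcs2
  -- bounds on beta and t
  have hβα : αs ≤ β := by
    rw [hβdef, le_div_iff₀ hsqQpos]
    exact hstepA
  have hβ0 : 0 ≤ β := hα0.trans hβα
  have htκ : κ ≤ t := by
    rw [hκ, htdef, div_le_div_iff₀ hL (by positivity)]
    nlinarith only [hsqQL, hdot, hL, mul_nonneg hμ.le hR.le]
  have ht1 : t ≤ 1 := by
    rw [htdef, div_le_one (by positivity)]
    linarith only [hP1]
  have hprod1 : κ * αs ≤ β * t := by
    have h := mul_le_mul hβα htκ hκ0 hβ0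
    linarith only [h]
  have hsq1 : Real.sqrt ((s : ℝ) - β ^ 2) ≤ Real.sqrt ((s : ℝ) - αs ^ 2) :=
    Real.sqrt_le_sqrt (by nlinarith only [hα0, hβα])
  have hsq2 : Real.sqrt (1 - t ^ 2) ≤ Real.sqrt (1 - κ ^ 2) :=
    Real.sqrt_le_sqrt (by nlinarith only [hκ0, htκ])
  have hprod2 : Real.sqrt ((s : ℝ) - β ^ 2) * Real.sqrt (1 - t ^ 2)
      ≤ Real.sqrt ((s : ℝ) - αs ^ 2) * Real.sqrt (1 - κ ^ 2) :=
    mul_le_mul hsq1 hsq2 (Real.sqrt_nonneg _) (Real.sqrt_nonneg _)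
  have m1 := mul_le_mul_of_nonneg_left hprod1 hR.le
  have m2 := mul_le_mul_of_nonneg_left hprod2 hR.le
  linarith only [hcs2, m1, m2]
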